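/- Let F, G : ℝ^n × (0,∞) → [0,∞] be measurable and let a > 0. Define the area functional 𝒜₂^a H(x) = ( ∫_{{(y,t) : |x-y| < a t, t > 0}} H(y,t)² t^{-(n+1)} dy dt )^{1/2}. Then ∫_{ℝ^n} ∫_0^∞ F(x,t) G(x,t) dt dx ≤ (1/(C_n a^n)) ∫_{ℝ^n} 𝒜₂^a(F)(x) · 𝒜₂^a(t·G)(x) dx, where t·G denotes the function (y,t) ↦ t G(y,t) and C_n is the volume of the unit ball in ℝ^n. -/

import Mathlib

open MeasureTheory Set ENNReal

/-- The area functional `𝒜₂^a` of aperture `a`. -/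
noncomputable def areaIntegral (n : ℕ) (a : ℝ)
    (H : EuclideanSpace ℝ (Fin n) × ℝ → ℝ≥0∞) (x : EuclideanSpace ℝ (Fin n)) : ℝ≥0∞ :=
  (∫⁻ p in {p : EuclideanSpace ℝ (Fin n) × ℝ | dist x p.1 < a * p.2 ∧ 0 < p.2},
      (H p) ^ 2 / ENNReal.ofReal (p.2 ^ (n + 1))) ^ (1 / 2 : ℝ)

lemma vol_ball_eq {n : ℕ} (x : EuclideanSpace ℝ (Fin n)) {r : ℝ} (hr : 0 < r) :
    volume (Metric.ball x r)
      = ENNReal.ofReal (r ^ n) * volume (Metric.ball (0 : EuclideanSpace ℝ (Fin n)) 1) := by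
  rcases Nat.eq_zero_or_pos n with h | h
  · subst h
    have h1 : Metric.ball x r = univ := by
      ext y; simp [Metric.mem_ball, Subsingleton.elim y x, hr]
    have h2 : Metric.ball (0 : EuclideanSpace ℝ (Fin 0)) 1 = univ := by
      ext y; simp [Metric.mem_ball, Subsingleton.elim y (0 : EuclideanSpace ℝ (Fin 0))]
    simp [h1, h2]
  · haveI : Nontrivial (EuclideanSpace ℝ (Fin n)) :=
      Module.nontrivial_of_finrank_pos (R := ℝ)
        (by rw [finrank_euclideanSpace_fin]; exact h)
    simpa [finrank_euclideanSpace_fin] using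
      Measure.addHaar_ball (volume : Measure (EuclideanSpace ℝ (Fin n))) x hr.le

lemma sq_rpow_half {z : ℝ≥0∞} : (z ^ 2) ^ (1 / 2 : ℝ) = z := by
  rw [← ENNReal.rpow_natCast z 2, ← ENNReal.rpow_mul]
  norm_num

theorem area_pairing_bound (n : ℕ) (a : ℝ) (ha : 0 < a)
    (F G : EuclideanSpace ℝ (Fin n) × ℝ → ℝ≥0∞) (hF : Measurable F) (hG : Measurable G) :
    (∫⁻ x, ∫⁻ t in Set.Ioi (0 : ℝ), F (x, t) * G (x, t)) ≤
      (volume (Metric.ball (0 : EuclideanSpace ℝ (Fin n)) 1) * ENNReal.ofReal (a ^ n))⁻¹ *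
        ∫⁻ x, areaIntegral n a F x * areaIntegral n a (fun p => ENNReal.ofReal p.2 * G p) x := by
  set C : ℝ≥0∞ := volume (Metric.ball (0 : EuclideanSpace ℝ (Fin n)) 1) * ENNReal.ofReal (a ^ n) with hCdef
  have hC0 : C ≠ 0 :=
    mul_ne_zero (Metric.measure_ball_pos _ _ one_pos).ne'
      (ENNReal.ofReal_pos.2 (pow_pos ha n)).ne'
  have hCtop : C ≠ ∞ := ENNReal.mul_ne_top measure_ball_lt_top.ne ENNReal.ofReal_ne_top
  set h : EuclideanSpace ℝ (Fin n) × ℝ → ℝ≥0∞ := fun p => F p * G p / ENNReal.ofReal (p.2 ^ n) with hhdef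
  have hh : Measurable h :=
    (hF.mul hG).div (measurable_snd.pow_const n).ennreal_ofReal
  set k : (EuclideanSpace ℝ (Fin n) × ℝ) → EuclideanSpace ℝ (Fin n) → ℝ≥0∞ :=
    fun p y => if dist y p.1 < a * p.2 then h p else 0 with hkdef
  have hk : Measurable (Function.uncurry k) := by
    apply Measurable.ite _ (hh.comp measurable_fst) measurable_const
    exact (isOpen_lt (by fun_prop) (by fun_prop)).measurableSet
  set ν : Measure (EuclideanSpace ℝ (Fin n) × ℝ) :=
    (volume : Measure (EuclideanSpace ℝ (Fin n))).prod ((volume : Measure ℝ).restrict (Ioi 0)) with hνdef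
  -- pointwise averaging identity
  have key : ∀ x : EuclideanSpace ℝ (Fin n), ∀ t ∈ Ioi (0 : ℝ), F (x, t) * G (x, t) = C⁻¹ * ∫⁻ y, k (x, t) y := by
    intro x t ht
    have ht0 : (0 : ℝ) < t := ht
    have hdn : ENNReal.ofReal (t ^ n) ≠ 0 := (ENNReal.ofReal_pos.2 (pow_pos ht0 n)).ne'
    have hdt : ENNReal.ofReal (t ^ n) ≠ ∞ := ENNReal.ofReal_ne_top
    have hint : ∫⁻ y, k (x, t) y = h (x, t) * volume (Metric.ball x (a * t)) := by
      have hkeq : (fun y => k (x, t) y)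
          = (Metric.ball (x : EuclideanSpace ℝ (Fin n)) (a * t)).indicator (fun _ => h (x, t)) := by
        ext y
        classical
        rw [Set.indicator_apply]
        simp [hkdef, Metric.mem_ball]
      rw [hkeq, lintegral_indicator measurableSet_ball _, setLIntegral_const]
    have hball : volume (Metric.ball x (a * t)) = C * ENNReal.ofReal (t ^ n) := by
      rw [vol_ball_eq x (mul_pos ha ht0), mul_pow,
        ENNReal.ofReal_mul (pow_nonneg ha.le n)]
      ring
    rw [hint, hball]
    symm
    calc C⁻¹ * (h (x, t) * (C * ENNReal.ofReal (t ^ n)))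
        = (C⁻¹ * C) * (ENNReal.ofReal (t ^ n) * h (x, t)) := by ring
      _ = ENNReal.ofReal (t ^ n) * h (x, t) := by
          rw [ENNReal.inv_mul_cancel hC0 hCtop, one_mul]
      _ = F (x, t) * G (x, t) := ENNReal.mul_div_cancel hdn hdt
  have hmeas_inner : Measurable fun p : EuclideanSpace ℝ (Fin n) × ℝ => ∫⁻ y, k p y :=
    Measurable.lintegral_prod_right hk
  -- the inner Cauchy–Schwarz bound
  have inner_bound : ∀ y : EuclideanSpace ℝ (Fin n), (∫⁻ p, k p y ∂ν)
      ≤ areaIntegral n a F y * areaIntegral n a (fun p => ENNReal.ofReal p.2 * G p) y := by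
    intro y
    set S : Set (EuclideanSpace ℝ (Fin n) × ℝ) := {p : EuclideanSpace ℝ (Fin n) × ℝ | dist y p.1 < a * p.2 ∧ 0 < p.2} with hSdef
    have hB : MeasurableSet {p : EuclideanSpace ℝ (Fin n) × ℝ | dist y p.1 < a * p.2} :=
      (isOpen_lt (by fun_prop) (by fun_prop)).measurableSet
    have hS : MeasurableSet S :=
      hB.inter (measurable_snd measurableSet_Ioi)
    have hSy : ∫⁻ p, k p y ∂ν = ∫⁻ p in S, h p := by
      have h1 : (fun p => k p y) = {p : EuclideanSpace ℝ (Fin n) × ℝ | dist y p.1 < a * p.2}.indicator h := by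
        ext p
        classical
        rw [Set.indicator_apply]
        simp [hkdef]
      have hset : {p : EuclideanSpace ℝ (Fin n) × ℝ | dist y p.1 < a * p.2} ∩ (univ ×ˢ Ioi 0) = S := by
        ext p
        simp only [Set.mem_inter_iff, Set.mem_setOf_eq, Set.mem_prod, Set.mem_univ,
          Set.mem_Ioi, true_and, hSdef]
      rw [h1, lintegral_indicator hB _, hνdef,
        ← Measure.restrict_univ (μ := (volume : Measure (EuclideanSpace ℝ (Fin n)))), Measure.prod_restrict,
        Measure.restrict_restrict hB, ← Measure.volume_eq_prod, hset]
    rw [hSy]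
    set f : EuclideanSpace ℝ (Fin n) × ℝ → ℝ≥0∞ :=
      fun p => ((F p) ^ 2 / ENNReal.ofReal (p.2 ^ (n + 1))) ^ (1 / 2 : ℝ) with hfdef
    set g : EuclideanSpace ℝ (Fin n) × ℝ → ℝ≥0∞ :=
      fun p => ((ENNReal.ofReal p.2 * G p) ^ 2 / ENNReal.ofReal (p.2 ^ (n + 1))) ^ (1 / 2 : ℝ)
      with hgdef
    have hfm : Measurable f := by
      apply Measurable.pow_const
      exact (hF.pow_const 2).div (measurable_snd.pow_const _).ennreal_ofReal
    have hgm : Measurable g := by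
      apply Measurable.pow_const
      exact ((measurable_snd.ennreal_ofReal.mul hG).pow_const 2).div
        (measurable_snd.pow_const _).ennreal_ofReal
    have hfg : ∀ p ∈ S, h p = f p * g p := by
      intro p hp
      obtain ⟨-, htp⟩ := hp
      set t : ℝ := p.2
      have hc0 : ENNReal.ofReal (t ^ (n + 1)) ≠ 0 :=
        (ENNReal.ofReal_pos.2 (pow_pos htp (n + 1))).ne'
      have hct : ENNReal.ofReal (t ^ (n + 1)) ≠ ∞ := ENNReal.ofReal_ne_top
      have ht0 : ENNReal.ofReal t ≠ 0 := (ENNReal.ofReal_pos.2 htp).ne'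
      have htt : ENNReal.ofReal t ≠ ∞ := ENNReal.ofReal_ne_top
      have step1 : f p * g p
          = (F p * (ENNReal.ofReal t * G p) / ENNReal.ofReal (t ^ (n + 1))) := by
        rw [hfdef, hgdef, ← ENNReal.mul_rpow_of_nonneg _ _ (by norm_num : (0:ℝ) ≤ 1/2)]
        have : (F p) ^ 2 / ENNReal.ofReal (t ^ (n + 1))
            * ((ENNReal.ofReal t * G p) ^ 2 / ENNReal.ofReal (t ^ (n + 1)))
            = (F p * (ENNReal.ofReal t * G p) / ENNReal.ofReal (t ^ (n + 1))) ^ 2 := by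
          simp only [div_eq_mul_inv]; ring
        rw [this, sq_rpow_half]
      rw [step1, hhdef]
      have hsplit : ENNReal.ofReal (t ^ (n + 1))
          = ENNReal.ofReal (t ^ n) * ENNReal.ofReal t := by
        rw [← ENNReal.ofReal_mul (pow_nonneg htp.le n), ← pow_succ]
      rw [hsplit]
      calc F p * G p / ENNReal.ofReal (t ^ n)
          = F p * G p * ENNReal.ofReal t
              / (ENNReal.ofReal (t ^ n) * ENNReal.ofReal t) := by
            rw [ENNReal.mul_div_mul_right _ _ ht0 htt]
        _ = F p * (ENNReal.ofReal t * G p)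
              / (ENNReal.ofReal (t ^ n) * ENNReal.ofReal t) := by ring_nf
    calc ∫⁻ p in S, h p
        = ∫⁻ p in S, (f * g) p := by
          refine setLIntegral_congr_fun hS ?_
          intro p hp; exact hfg p hp
      _ ≤ (∫⁻ p in S, f p ^ (2:ℝ)) ^ (1 / 2 : ℝ) * (∫⁻ p in S, g p ^ (2:ℝ)) ^ (1 / 2 : ℝ) :=
          ENNReal.lintegral_mul_le_Lp_mul_Lq _
            Real.HolderConjugate.two_two
            hfm.aemeasurable hgm.aemeasurable
      _ = areaIntegral n a F y * areaIntegral n a (fun p => ENNReal.ofReal p.2 * G p) y := by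
          have hf2 : ∀ p : EuclideanSpace ℝ (Fin n) × ℝ, f p ^ (2:ℝ)
              = (F p) ^ 2 / ENNReal.ofReal (p.2 ^ (n + 1)) := by
            intro p; rw [hfdef, ← ENNReal.rpow_mul]; norm_num
          have hg2 : ∀ p : EuclideanSpace ℝ (Fin n) × ℝ, g p ^ (2:ℝ)
              = (ENNReal.ofReal p.2 * G p) ^ 2 / ENNReal.ofReal (p.2 ^ (n + 1)) := by
            intro p; rw [hgdef, ← ENNReal.rpow_mul]; norm_num
          simp_rw [hf2, hg2]
          rfl
  -- put everything together
  have hC_inv_ne_top : C⁻¹ ≠ ∞ := ENNReal.inv_ne_top.2 hC0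
  calc (∫⁻ x, ∫⁻ t in Set.Ioi (0 : ℝ), F (x, t) * G (x, t))
      = ∫⁻ x, ∫⁻ t in Set.Ioi (0 : ℝ), C⁻¹ * ∫⁻ y, k (x, t) y := by
        refine lintegral_congr fun x => setLIntegral_congr_fun measurableSet_Ioi ?_
        exact fun t ht => key x t ht
    _ = C⁻¹ * ∫⁻ x, ∫⁻ t in Set.Ioi (0 : ℝ), ∫⁻ y, k (x, t) y := by
        simp_rw [lintegral_const_mul' (C⁻¹) _ hC_inv_ne_top]
    _ = C⁻¹ * ∫⁻ p, (∫⁻ y, k p y) ∂ν := by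
        rw [lintegral_prod _ hmeas_inner.aemeasurable]
    _ = C⁻¹ * ∫⁻ y, ∫⁻ p, k p y ∂ν := by
        rw [lintegral_lintegral_swap hk.aemeasurable]
    _ ≤ C⁻¹ * ∫⁻ y, areaIntegral n a F y
          * areaIntegral n a (fun p => ENNReal.ofReal p.2 * G p) y :=
        mul_le_mul_right (lintegral_mono fun y => inner_bound y) _
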